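/- Fix an integer K ≥ 2 and reals λ_1, …, λ_d > 0. Define Δ(x) = (1/(K−1))∑_{i>j} x_i x_j − (1/(K+1))∑_{i≥j} x_i x_j on ℝ^d. Let 𝒞 ⊆ {1,…,d} with c = |𝒞| and K + c − d > 0, and let H_𝒞 = {x : x_i = √λ_i for i ∈ 𝒞}. Then the restriction of Δ to H_𝒞 has a unique stationary point, given by x_j = (∑_{i∈𝒞} √λ_i)/(K + c − d) for all j ∉ 𝒞, and the value of Δ there equals K/((K²−1)(K+c−d)) · [ (∑_{i∈𝒞} √λ_i)² − (K+c−d)∑_{i∈𝒞} λ_i ]. -/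

import Mathlib

open Finset

private theorem sumlt18 (d : ℕ) (x : Fin d → ℝ) :
    ∑ i, ∑ j ∈ univ.filter (fun j => j < i), x i * x j
      = ((∑ i, x i)^2 - ∑ i, (x i)^2) / 2 := by
  have swap : ∑ i, ∑ j ∈ univ.filter (fun j => j < i), x i * x j
      = ∑ i, ∑ j ∈ univ.filter (fun j => i < j), x i * x j := by
    rw [Finset.sum_comm' (s' := fun j => univ.filter (fun i => j < i)) (t' := univ)
      (fun i j => by simp)]
    exact Finset.sum_congr rfl (fun i _ => Finset.sum_congr rfl (fun j _ => mul_comm _ _))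
  have tri : ∀ i : Fin d, (univ : Finset (Fin d))
      = ((univ.filter (fun j => j < i)) ∪ (univ.filter (fun j => i < j))) ∪ {i} := by
    intro i
    ext j
    simp only [mem_union, mem_filter, mem_univ, true_and, mem_singleton]
    rcases lt_trichotomy j i with h|h|h <;> simp [h]
  have sqe : (∑ i, x i)^2 = ∑ i, ∑ j, x i * x j := by
    rw [sq, Finset.sum_mul_sum]
  have expand : ∀ i : Fin d, ∑ j, x i * x j
      = (∑ j ∈ univ.filter (fun j => j < i), x i * x j)
        + (∑ j ∈ univ.filter (fun j => i < j), x i * x j) + x i * x i := by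
    intro i
    conv_lhs => rw [tri i]
    rw [Finset.sum_union, Finset.sum_union, Finset.sum_singleton]
    · rw [Finset.disjoint_left]; intro a h1 h2
      simp only [mem_filter, mem_univ, true_and] at h1 h2
      exact absurd (h1.trans h2) (lt_irrefl _)
    · rw [Finset.disjoint_left]; intro a h1 h2
      simp only [mem_filter, mem_univ, true_and, mem_union, mem_singleton] at h1 h2
      rcases h1 with h|h <;> simp [h2] at h
  rw [sqe, Finset.sum_congr rfl (fun i _ => expand i)]
  rw [Finset.sum_add_distrib, Finset.sum_add_distrib, ← swap]
  have : ∀ i : Fin d, x i * x i = (x i)^2 := fun i => (sq (x i)).symm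
  rw [Finset.sum_congr rfl (fun i _ => this i)]
  ring

private theorem sumle18 (d : ℕ) (x : Fin d → ℝ) :
    ∑ i, ∑ j ∈ univ.filter (fun j => j ≤ i), x i * x j
      = ((∑ i, x i)^2 + ∑ i, (x i)^2) / 2 := by
  have split : ∀ i : Fin d, (univ.filter (fun j => j ≤ i))
      = (univ.filter (fun j => j < i)) ∪ {i} := by
    intro i; ext j
    simp only [mem_union, mem_filter, mem_univ, true_and, mem_singleton]
    constructor
    · intro h; rcases lt_or_eq_of_le h with h|h; exacts [Or.inl h, Or.inr h]
    · rintro (h|rfl); exacts [le_of_lt h, le_refl _]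
  have : ∀ i : Fin d, ∑ j ∈ univ.filter (fun j => j ≤ i), x i * x j
      = (∑ j ∈ univ.filter (fun j => j < i), x i * x j) + (x i)^2 := by
    intro i
    rw [split i, Finset.sum_union, Finset.sum_singleton, sq]
    rw [Finset.disjoint_left]; intro a h1 h2
    simp only [mem_filter, mem_univ, true_and, mem_singleton] at h1 h2
    exact absurd (h2 ▸ h1) (lt_irrefl _)
  rw [Finset.sum_congr rfl (fun i _ => this i), Finset.sum_add_distrib, sumlt18]
  ring

private theorem gderiv18 (d : ℕ) (K : ℝ) (x : Fin d → ℝ) :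
    HasFDerivAt (fun y : Fin d → ℝ => (1/(K^2-1)) * ((∑ i, y i)^2 - K * ∑ i, (y i)^2))
      ((1/(K^2-1)) • ((2*∑ i, x i) • (∑ i, ContinuousLinearMap.proj (R := ℝ) (φ := fun _ : Fin d => ℝ) i)
        - (2*K) • (∑ i, x i • ContinuousLinearMap.proj (R := ℝ) (φ := fun _ : Fin d => ℝ) i))) x := by
  have key : (fun y : Fin d → ℝ => ∑ i, y i)
      = ⇑(∑ i, ContinuousLinearMap.proj (R := ℝ) (φ := fun _ : Fin d => ℝ) i) := by
    funext y; simp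
  have hsum : HasFDerivAt (fun y : Fin d → ℝ => ∑ i, y i)
      (∑ i, ContinuousLinearMap.proj (R := ℝ) (φ := fun _ : Fin d => ℝ) i) x := by
    rw [key]; exact ContinuousLinearMap.hasFDerivAt _
  have h2 : HasFDerivAt (fun y : Fin d → ℝ => (∑ i, y i)^2)
      ((2*∑ i, x i) • (∑ i, ContinuousLinearMap.proj (R := ℝ) (φ := fun _ : Fin d => ℝ) i)) x := by
    have := hsum.mul hsum
    have e : (fun y : Fin d → ℝ => (∑ i, y i)^2) = fun y => (∑ i, y i) * (∑ i, y i) := by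
      funext y; ring
    rw [e]
    refine this.congr_fderiv (Eq.symm ?_)
    module
  have h3 : HasFDerivAt (fun y : Fin d → ℝ => ∑ i, (y i)^2)
      (∑ i, (2 * x i) • ContinuousLinearMap.proj (R := ℝ) (φ := fun _ : Fin d => ℝ) i) x := by
    apply HasFDerivAt.fun_sum
    intro i _
    have hp : HasFDerivAt (fun y : Fin d → ℝ => y i)
        (ContinuousLinearMap.proj (R := ℝ) (φ := fun _ : Fin d => ℝ) i) x := by
      have e : (fun y : Fin d → ℝ => y i)
          = ⇑(ContinuousLinearMap.proj (R := ℝ) (φ := fun _ : Fin d => ℝ) i) := rfl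
      rw [e]; exact ContinuousLinearMap.hasFDerivAt _
    have := hp.mul hp
    have e : (fun y : Fin d → ℝ => (y i)^2) = fun y => y i * y i := by funext y; ring
    rw [e]
    refine this.congr_fderiv (Eq.symm ?_)
    module
  have h4 := (h2.sub (h3.const_mul K)).const_mul (1/(K^2-1))
  refine h4.congr_fderiv (Eq.symm ?_)
  apply ContinuousLinearMap.ext
  intro v
  simp only [ContinuousLinearMap.smul_apply, ContinuousLinearMap.sub_apply,
    ContinuousLinearMap.sum_apply, ContinuousLinearMap.coe_smul', Pi.smul_apply,
    smul_eq_mul, Finset.smul_sum]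
  ring_nf

theorem stmt18 (d K : ℕ) (hK : 2 ≤ K) (lam : Fin d → ℝ) (hpos : ∀ i, 0 < lam i)
    (C : Finset (Fin d)) (c : ℕ) (hc : C.card = c) (hKcd : 0 < (K:ℝ) + c - d)
    (Δ : (Fin d → ℝ) → ℝ)
    (hΔ : ∀ x : Fin d → ℝ,
      Δ x = (1/((K:ℝ)-1)) * ∑ i, ∑ j ∈ Finset.univ.filter (fun j => j < i), x i * x j
          - (1/((K:ℝ)+1)) * ∑ i, ∑ j ∈ Finset.univ.filter (fun j => j ≤ i), x i * x j)
    (x : Fin d → ℝ) (hx : ∀ i ∈ C, x i = Real.sqrt (lam i)) :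
    ((∀ j ∉ C, fderiv ℝ Δ x (Pi.single j 1) = 0) ↔
      (∀ j ∉ C, x j = (∑ i ∈ C, Real.sqrt (lam i)) / ((K:ℝ) + c - d))) ∧
    ((∀ j ∉ C, x j = (∑ i ∈ C, Real.sqrt (lam i)) / ((K:ℝ) + c - d)) →
      Δ x = (K:ℝ) / (((K:ℝ)^2 - 1) * ((K:ℝ) + c - d)) *
        ((∑ i ∈ C, Real.sqrt (lam i))^2 - ((K:ℝ) + c - d) * ∑ i ∈ C, lam i)) := by
  have hK2 : (2:ℝ) ≤ (K:ℝ) := by exact_mod_cast hK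
  have hKne : (K:ℝ) ≠ 0 := by linarith
  have hKm1 : (K:ℝ) - 1 ≠ 0 := by linarith
  have hKp1 : (K:ℝ) + 1 ≠ 0 := by linarith
  have hKsq : (K:ℝ)^2 - 1 ≠ 0 := by nlinarith
  have hmne : (K:ℝ) + c - d ≠ 0 := ne_of_gt hKcd
  -- Δ in closed form
  have hΔg : Δ = fun y : Fin d → ℝ =>
      (1/((K:ℝ)^2-1)) * ((∑ i, y i)^2 - (K:ℝ) * ∑ i, (y i)^2) := by
    funext y
    rw [hΔ, sumlt18, sumle18]
    field_simp
    ring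
  set S := ∑ i, x i with hS
  set T := ∑ i ∈ C, Real.sqrt (lam i) with hT
  -- cardinality of complement
  have hcd : c ≤ d := hc ▸ (le_trans (Finset.card_le_univ C) (by simp))
  have hcard : ((Cᶜ.card : ℕ) : ℝ) = (d:ℝ) - (c:ℝ) := by
    rw [Finset.card_compl, hc, Fintype.card_fin, Nat.cast_sub hcd]
  -- fderiv value
  have hval : ∀ j : Fin d, fderiv ℝ Δ x (Pi.single j 1)
      = (1/((K:ℝ)^2-1)) * (2*S - 2*(K:ℝ)*x j) := by
    intro j
    rw [hΔg, (gderiv18 d (K:ℝ) x).fderiv]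
    simp only [ContinuousLinearMap.smul_apply, ContinuousLinearMap.sub_apply,
      ContinuousLinearMap.sum_apply, ContinuousLinearMap.coe_smul', Pi.smul_apply,
      ContinuousLinearMap.proj_apply, smul_eq_mul]
    simp [Pi.single_apply, mul_ite]
    exact Or.inl rfl
  -- split of S
  have hsplit : S = T + ∑ j ∈ Cᶜ, x j := by
    rw [hS, ← Finset.sum_add_sum_compl C]
    congr 1
    exact Finset.sum_congr rfl (fun i hi => hx i hi)
  constructor
  · constructor
    · -- forward
      intro h j hj
      have hxj : ∀ j ∉ C, x j = S / K := by
        intro j hj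
        have := h j hj
        rw [hval j] at this
        have h2 : 2*S - 2*(K:ℝ)*x j = 0 := by
          by_contra hne
          exact hne (by field_simp at this; linarith [this])
        field_simp
        linarith
      have hsum2 : ∑ j ∈ Cᶜ, x j = (Cᶜ.card : ℝ) * (S / K) := by
        rw [Finset.sum_congr rfl (fun j hj => hxj j (by simpa using hj))]
        simp [mul_comm]
      have hSm : S * ((K:ℝ) + c - d) = T * K := by
        have := hsplit
        rw [hsum2, hcard] at this
        field_simp at this ⊢
        nlinarith [this]
      rw [hxj j hj]
      rw [div_eq_div_iff hKne hmne]
      linarith [hSm]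
    · -- backward
      intro h j hj
      have hsum2 : ∑ j ∈ Cᶜ, x j = ((d:ℝ) - c) * (T / ((K:ℝ) + c - d)) := by
        rw [Finset.sum_congr rfl (fun j hj => h j (by simpa using hj))]
        rw [Finset.sum_const, nsmul_eq_mul, hcard]
      have hSv : S = T * K / ((K:ℝ) + c - d) := by
        rw [hsplit, hsum2]
        field_simp
        ring
      rw [hval j, h j hj, hSv]
      field_simp
      ring
  · -- value
    intro h
    have hsum2 : ∑ j ∈ Cᶜ, x j = ((d:ℝ) - c) * (T / ((K:ℝ) + c - d)) := by
      rw [Finset.sum_congr rfl (fun j hj => h j (by simpa using hj))]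
      rw [Finset.sum_const, nsmul_eq_mul, hcard]
    have hSv : S = T * K / ((K:ℝ) + c - d) := by
      rw [hsplit, hsum2]
      field_simp
      ring
    have hQ : ∑ i, (x i)^2 = (∑ i ∈ C, lam i)
        + ((d:ℝ) - c) * (T / ((K:ℝ) + c - d))^2 := by
      rw [← Finset.sum_add_sum_compl C]
      congr 1
      · exact Finset.sum_congr rfl (fun i hi => by
          rw [hx i hi, Real.sq_sqrt (le_of_lt (hpos i))])
      · rw [Finset.sum_congr rfl (fun j hj => by rw [h j (by simpa using hj)])]
        rw [Finset.sum_const, nsmul_eq_mul, hcard]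
    rw [hΔg]
    simp only
    rw [← hS, hSv, hQ]
    field_simp
    ring
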